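/- arXiv:1901.11374 — 3 statements merged into one kernel-verified Lean document; each statement's English description precedes it below -/
import Mathlib

section
/- Let ξ and η be strictly positive probability vectors in ℝ^p, and let h(ξ,η) = log max_{k,l} ((ξ_k/η_k)/(ξ_l/η_l)) denote their Hilbert distance. Then the total variation distance satisfies ‖ξ − η‖_TV ≤ (1/2)(e^{h(ξ,η)} − 1). -/
theorem stmt2 (p : ℕ) [NeZero p] (ξ η : Fin p → ℝ)
    (hξ : ∀ i, 0 < ξ i) (hη : ∀ i, 0 < η i)
    (hξ1 : ∑ i, ξ i = 1) (hη1 : ∑ i, η i = 1) :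
    (1 / 2) * ∑ i, |ξ i - η i| ≤
      (1 / 2) * (Real.exp (Real.log (⨆ k, ⨆ l, (ξ k / η k) * (η l / ξ l))) - 1) := by
  have hp : Nonempty (Fin p) := ⟨⟨0, Nat.pos_of_ne_zero (NeZero.ne p)⟩⟩
  set f : Fin p → ℝ := fun i => ξ i / η i with hf
  obtain ⟨k0, hk0⟩ := Finite.exists_max f
  obtain ⟨l0, hl0⟩ := Finite.exists_min f
  have hfpos : ∀ i, 0 < f i := fun i => div_pos (hξ i) (hη i)
  have ha : 0 < f l0 := hfpos l0
  have hb : 0 < f k0 := hfpos k0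
  have hab : f l0 ≤ f k0 := hl0 k0
  have hξη : ∀ i, ξ i = η i * f i := by
    intro i
    simp only [hf]
    rw [mul_comm, div_mul_cancel₀ _ (ne_of_gt (hη i))]
  have ha1 : f l0 ≤ 1 := by
    by_contra h
    push_neg at h
    have hlt : ∀ i ∈ Finset.univ, η i < ξ i := by
      intro i _
      rw [hξη i]
      nlinarith [hl0 i, hη i]
    have := Finset.sum_lt_sum_of_nonempty (Finset.univ_nonempty) hlt
    rw [hξ1, hη1] at this
    linarith
  have hb1 : 1 ≤ f k0 := by
    by_contra h
    push_neg at h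
    have hlt : ∀ i ∈ Finset.univ, ξ i < η i := by
      intro i _
      rw [hξη i]
      nlinarith [hk0 i, hη i]
    have := Finset.sum_lt_sum_of_nonempty (Finset.univ_nonempty) hlt
    rw [hξ1, hη1] at this
    linarith
  -- sum bound
  have hsum : ∑ i, |ξ i - η i| ≤ f k0 - f l0 := by
    calc ∑ i, |ξ i - η i| ≤ ∑ i, η i * (f k0 - f l0) := by
          apply Finset.sum_le_sum
          intro i _
          rw [hξη i]
          have h1 : η i * f i - η i = η i * (f i - 1) := by ring
          rw [h1, abs_mul, abs_of_pos (hη i)]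
          have h2 : |f i - 1| ≤ f k0 - f l0 := by
            rw [abs_le]
            constructor
            · nlinarith [hl0 i]
            · nlinarith [hk0 i]
          nlinarith [hη i]
      _ = f k0 - f l0 := by rw [← Finset.sum_mul, hη1, one_mul]
  set M : ℝ := ⨆ k, ⨆ l, (ξ k / η k) * (η l / ξ l) with hM
  have hkey : f k0 / f l0 ≤ M := by
    have heq : f k0 / f l0 = (ξ k0 / η k0) * (η l0 / ξ l0) := by
      simp only [hf]
      rw [div_div_div_eq, div_mul_div_comm]
    rw [heq]
    have h1 : (ξ k0 / η k0) * (η l0 / ξ l0) ≤ ⨆ l, (ξ k0 / η k0) * (η l / ξ l) :=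
      le_ciSup (f := fun l => (ξ k0 / η k0) * (η l / ξ l)) (Set.Finite.bddAbove (Set.finite_range _)) l0
    have h2 : (⨆ l, (ξ k0 / η k0) * (η l / ξ l)) ≤ M :=
      le_ciSup (f := fun k => ⨆ l, (ξ k / η k) * (η l / ξ l)) (Set.Finite.bddAbove (Set.finite_range _)) k0
    exact h1.trans h2
  have hba1 : (1:ℝ) ≤ f k0 / f l0 := (one_le_div ha).mpr hab
  have hM1 : (1:ℝ) ≤ M := hba1.trans hkey
  rw [Real.exp_log (by linarith : (0:ℝ) < M)]
  have hstep : f k0 - f l0 ≤ f k0 / f l0 - 1 := by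
    rw [div_sub_one (ne_of_gt ha), le_div_iff₀ ha]
    nlinarith
  nlinarith
end

section
/- Let (ξ_k)_{k≥1} be a strictly stationary process of real random variables with E[ξ_1] = −c < 0 satisfying the q-th order M-mixing condition for some q > 4: E|ξ_1|^q < ∞ and E|∑_{k=1}^N (ξ_k − E ξ_k)|^q ≤ C·N^{q/2} for all N ≥ 1 and some constant C > 0. Define η = sup_{m≥1} (∑_{k=1}^m ξ_k)^+. Then E[η] < ∞. -/
open MeasureTheory
open scoped ENNReal

lemma aux_sum_rpow (N : ℕ) (a : ℕ → ℝ) (ha : ∀ k, 0 ≤ a k) (q : ℝ) (hq : 0 < q) :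
    (∑ k ∈ Finset.range N, a k) ^ q ≤ (N : ℝ) ^ q * ∑ k ∈ Finset.range N, a k ^ q := by
  set S := ∑ k ∈ Finset.range N, a k ^ q with hS
  have hS0 : 0 ≤ S := Finset.sum_nonneg fun k _ => Real.rpow_nonneg (ha k) q
  have hM : ∀ k ∈ Finset.range N, a k ≤ S ^ q⁻¹ := by
    intro k hk
    have h1 : a k ^ q ≤ S := Finset.single_le_sum (fun j _ => Real.rpow_nonneg (ha j) q) hk
    have h2 := Real.rpow_le_rpow (Real.rpow_nonneg (ha k) q) h1 (by positivity : (0:ℝ) ≤ q⁻¹)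
    rwa [Real.rpow_rpow_inv (ha k) (ne_of_gt hq)] at h2
  have hsum : ∑ k ∈ Finset.range N, a k ≤ (N : ℝ) * S ^ q⁻¹ := by
    have := Finset.sum_le_card_nsmul (Finset.range N) a (S ^ q⁻¹) hM
    simpa [nsmul_eq_mul] using this
  calc (∑ k ∈ Finset.range N, a k) ^ q
      ≤ ((N : ℝ) * S ^ q⁻¹) ^ q :=
        Real.rpow_le_rpow (Finset.sum_nonneg fun k _ => ha k) hsum hq.le
    _ = (N : ℝ) ^ q * (S ^ q⁻¹) ^ q :=
        Real.mul_rpow (Nat.cast_nonneg N) (Real.rpow_nonneg hS0 _)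
    _ = (N : ℝ) ^ q * S := by rw [Real.rpow_inv_rpow hS0 (ne_of_gt hq)]

lemma aux_abs_add (x c q : ℝ) (hc : 0 ≤ c) (hq : 0 ≤ q) :
    |x + c| ^ q ≤ 2 ^ q * (|x| ^ q + c ^ q) := by
  have h1 : |x + c| ≤ 2 * max |x| c := by
    have := abs_add_le x c
    rw [abs_of_nonneg hc] at this
    have hx : |x| ≤ max |x| c := le_max_left _ _
    have hc' : c ≤ max |x| c := le_max_right _ _
    linarith
  have h2 : |x + c| ^ q ≤ (2 * max |x| c) ^ q :=
    Real.rpow_le_rpow (abs_nonneg _) h1 hq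
  have hmax0 : 0 ≤ max |x| c := le_trans (abs_nonneg x) (le_max_left _ _)
  rw [Real.mul_rpow (by norm_num) hmax0] at h2
  refine h2.trans (mul_le_mul_of_nonneg_left ?_ (Real.rpow_nonneg (by norm_num) q))
  rcases le_total |x| c with h | h
  · rw [max_eq_right h]
    linarith [Real.rpow_nonneg (abs_nonneg x) q]
  · rw [max_eq_left h]
    linarith [Real.rpow_nonneg hc q]

theorem stmt10 {Ω : Type*} [MeasurableSpace Ω] (μ : Measure Ω) [IsProbabilityMeasure μ]
    (ξ : ℕ → Ω → ℝ) (hmeas : ∀ k, Measurable (ξ k))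
    (hstat : ∀ k : ℕ, Measure.map (fun ω => (fun n => ξ (n + k) ω : ℕ → ℝ)) μ =
      Measure.map (fun ω => (fun n => ξ n ω : ℕ → ℝ)) μ)
    (c : ℝ) (hc : 0 < c) (hmean : ∫ ω, ξ 1 ω ∂μ = -c)
    (q : ℝ) (hq : 4 < q)
    (hmom : Integrable (fun ω => |ξ 1 ω| ^ q) μ)
    (C : ℝ) (hC : 0 < C)
    (hmix : ∀ N : ℕ, 1 ≤ N →
      ∫ ω, |∑ k ∈ Finset.range N, (ξ (k + 1) ω - (-c))| ^ q ∂μ ≤ C * (N : ℝ) ^ (q / 2)) :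
    ∫⁻ ω, (⨆ m : ℕ, ENNReal.ofReal (∑ k ∈ Finset.range (m + 1), ξ (k + 1) ω)) ∂μ < ⊤ := by
  have hq0 : (0:ℝ) < q := by linarith
  set T : ℕ → Ω → ℝ := fun N ω => ∑ k ∈ Finset.range N, (ξ (k+1) ω + c) with hT
  -- distribution equality
  have hprocmeas : Measurable (fun ω => (fun n => ξ n ω : ℕ → ℝ)) :=
    measurable_pi_lambda _ fun n => hmeas n
  have hdist : ∀ k, Measure.map (ξ (k+1)) μ = Measure.map (ξ 1) μ := by
    intro k
    have heval : Measurable (fun f : ℕ → ℝ => f 1) := measurable_pi_apply 1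
    have h2 := congrArg (Measure.map (fun f : ℕ → ℝ => f 1)) (hstat k)
    rw [Measure.map_map heval (measurable_pi_lambda _ fun n => hmeas (n+k)),
        Measure.map_map heval hprocmeas] at h2
    have he1 : ((fun f : ℕ → ℝ => f 1) ∘ (fun ω => (fun n => ξ (n + k) ω : ℕ → ℝ)))
        = ξ (k+1) := by ext ω; simp [Function.comp, add_comm]
    have he2 : ((fun f : ℕ → ℝ => f 1) ∘ (fun ω => (fun n => ξ n ω : ℕ → ℝ))) = ξ 1 := rfl
    rwa [he1, he2] at h2
  have hgmeas : Measurable (fun x : ℝ => |x| ^ q) :=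
    (Real.continuous_rpow_const hq0.le).measurable.comp measurable_abs
  have hintk : ∀ k, Integrable (fun ω => |ξ (k+1) ω| ^ q) μ := by
    intro k
    have h1 : Integrable (fun x : ℝ => |x| ^ q) (Measure.map (ξ 1) μ) := by
      rw [integrable_map_measure hgmeas.aestronglyMeasurable (hmeas 1).aemeasurable]
      exact hmom
    rw [← hdist k,
      integrable_map_measure hgmeas.aestronglyMeasurable (hmeas (k+1)).aemeasurable] at h1
    exact h1
  have hTmeas : ∀ N, Measurable (T N) := by
    intro N
    exact Finset.measurable_sum _ fun k _ => (hmeas (k+1)).add_const c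
  have hTint : ∀ N, Integrable (fun ω => |T N ω| ^ q) μ := by
    intro N
    have hG : Integrable (fun ω => (N:ℝ)^q *
        ∑ k ∈ Finset.range N, 2^q * (|ξ (k+1) ω|^q + c^q)) μ := by
      apply Integrable.const_mul
      apply integrable_finset_sum
      intro k hk
      exact ((hintk k).add (integrable_const _)).const_mul _
    refine hG.mono' ((Real.continuous_rpow_const hq0.le).measurable.comp
      (hTmeas N).abs).aestronglyMeasurable ?_
    filter_upwards with ω
    rw [Real.norm_eq_abs, abs_of_nonneg (Real.rpow_nonneg (abs_nonneg _) q)]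
    have h1 : |T N ω| ≤ ∑ k ∈ Finset.range N, |ξ (k+1) ω + c| :=
      Finset.abs_sum_le_sum_abs _ _
    have h2 : |T N ω| ^ q ≤ (∑ k ∈ Finset.range N, |ξ (k+1) ω + c|) ^ q :=
      Real.rpow_le_rpow (abs_nonneg _) h1 hq0.le
    refine h2.trans ((aux_sum_rpow N _ (fun k => abs_nonneg _) q hq0).trans ?_)
    gcongr with k hk
    exact aux_abs_add _ _ _ hc.le hq0.le
  -- key per-N bound
  have key : ∀ m : ℕ, ∫⁻ ω, ENNReal.ofReal (∑ k ∈ Finset.range (m+1), ξ (k+1) ω) ∂μ ≤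
      ENNReal.ofReal (C * ((m+1:ℕ):ℝ)^(q/2) * (((m+1:ℕ):ℝ)*c)^(1-q)) := by
    intro m
    set N := m + 1 with hN
    have hNpos : (0:ℝ) < (N:ℝ) := by positivity
    have hb : (0:ℝ) < (N:ℝ)*c := by positivity
    have hpt : ∀ ω, ENNReal.ofReal (∑ k ∈ Finset.range N, ξ (k+1) ω) ≤
        ENNReal.ofReal (|T N ω|^q * ((N:ℝ)*c)^(1-q)) := by
      intro ω
      have hsum : ∑ k ∈ Finset.range N, ξ (k+1) ω = T N ω - (N:ℝ)*c := by
        simp [hT, Finset.sum_add_distrib]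
      rcases le_or_gt (∑ k ∈ Finset.range N, ξ (k+1) ω) 0 with h | h
      · rw [ENNReal.ofReal_eq_zero.2 h]; exact zero_le
      · apply ENNReal.ofReal_le_ofReal
        have hTpos : (N:ℝ)*c < T N ω := by rw [hsum] at h; linarith
        have habs : (N:ℝ)*c ≤ |T N ω| := le_trans hTpos.le (le_abs_self _)
        have hT0 : 0 < |T N ω| := lt_of_lt_of_le hb habs
        have h1 : T N ω - (N:ℝ)*c ≤ |T N ω| :=
          le_trans (by linarith [le_abs_self (T N ω)]) (le_refl _)
        rw [hsum]
        refine h1.trans ?_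
        have hdecomp : |T N ω| ^ q * ((N:ℝ)*c)^(1-q)
            = |T N ω| * (|T N ω| ^ (q-1) * ((N:ℝ)*c)^(1-q)) := by
          have hp : |T N ω| ^ q = |T N ω| * |T N ω| ^ (q-1) := by
            have h6 := Real.rpow_add hT0 1 (q-1)
            rw [Real.rpow_one] at h6
            rw [← h6]; norm_num
          rw [hp, mul_assoc]
        rw [hdecomp]
        have h3 : ((N:ℝ)*c) ^ (q-1) ≤ |T N ω| ^ (q-1) :=
          Real.rpow_le_rpow hb.le habs (by linarith)
        have h4 : 1 ≤ |T N ω| ^ (q-1) * ((N:ℝ)*c)^(1-q) := by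
          have h5 : ((N:ℝ)*c)^(q-1) * ((N:ℝ)*c)^(1-q) = 1 := by
            rw [← Real.rpow_add hb]; norm_num
          calc (1:ℝ) = ((N:ℝ)*c)^(q-1) * ((N:ℝ)*c)^(1-q) := h5.symm
            _ ≤ |T N ω| ^ (q-1) * ((N:ℝ)*c)^(1-q) :=
              mul_le_mul_of_nonneg_right h3 (Real.rpow_nonneg hb.le _)
        nlinarith [abs_nonneg (T N ω)]
    have hintineq : ∫ ω, |T N ω| ^ q ∂μ ≤ C * (N:ℝ)^(q/2) := by
      have := hmix N (by omega)
      simpa [sub_neg_eq_add, hT] using this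
    calc ∫⁻ ω, ENNReal.ofReal (∑ k ∈ Finset.range N, ξ (k+1) ω) ∂μ
        ≤ ∫⁻ ω, ENNReal.ofReal (|T N ω|^q * ((N:ℝ)*c)^(1-q)) ∂μ := lintegral_mono hpt
      _ = (∫⁻ ω, ENNReal.ofReal (|T N ω|^q) ∂μ) * ENNReal.ofReal (((N:ℝ)*c)^(1-q)) := by
          simp_rw [ENNReal.ofReal_mul (Real.rpow_nonneg (abs_nonneg _) q)]
          exact lintegral_mul_const _ (ENNReal.measurable_ofReal.comp
            ((Real.continuous_rpow_const hq0.le).measurable.comp (hTmeas N).abs))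
      _ = ENNReal.ofReal (∫ ω, |T N ω|^q ∂μ) * ENNReal.ofReal (((N:ℝ)*c)^(1-q)) := by
          rw [← ofReal_integral_eq_lintegral_ofReal (hTint N)
            (ae_of_all _ fun ω => Real.rpow_nonneg (abs_nonneg _) q)]
      _ ≤ ENNReal.ofReal (C * (N:ℝ)^(q/2)) * ENNReal.ofReal (((N:ℝ)*c)^(1-q)) := by
          exact mul_le_mul_left (ENNReal.ofReal_le_ofReal hintineq) _
      _ = ENNReal.ofReal (C * ((N:ℕ):ℝ)^(q/2) * (((N:ℕ):ℝ)*c)^(1-q)) := by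
          rw [← ENNReal.ofReal_mul (by positivity)]
  -- summability of the bound
  have hsummable : Summable (fun m : ℕ => C * ((m+1:ℕ):ℝ)^(q/2) * (((m+1:ℕ):ℝ)*c)^(1-q)) := by
    have h1 : Summable (fun n : ℕ => (n:ℝ)^(1 - q/2)) :=
      Real.summable_nat_rpow.2 (by linarith)
    have h2 : Summable (fun m : ℕ => ((m+1:ℕ):ℝ)^(1 - q/2)) :=
      h1.comp_injective Nat.succ_injective
    have heq : ∀ m : ℕ, C * ((m+1:ℕ):ℝ)^(q/2) * (((m+1:ℕ):ℝ)*c)^(1-q)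
        = (C * c^(1-q)) * ((m+1:ℕ):ℝ)^(1 - q/2) := by
      intro m
      have hm : (0:ℝ) < ((m+1:ℕ):ℝ) := by positivity
      rw [Real.mul_rpow hm.le hc.le, ← mul_assoc]
      rw [show C * ((m+1:ℕ):ℝ)^(q/2) * ((m+1:ℕ):ℝ)^(1-q)
          = C * (((m+1:ℕ):ℝ)^(q/2) * ((m+1:ℕ):ℝ)^(1-q)) by ring,
        ← Real.rpow_add hm]
      ring_nf
    refine Summable.congr ((h2.mul_left (C * c^(1-q)))) fun m => (heq m).symm
  -- conclusion
  calc ∫⁻ ω, (⨆ m : ℕ, ENNReal.ofReal (∑ k ∈ Finset.range (m + 1), ξ (k + 1) ω)) ∂μ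
      ≤ ∫⁻ ω, ∑' m : ℕ, ENNReal.ofReal (∑ k ∈ Finset.range (m + 1), ξ (k + 1) ω) ∂μ :=
        lintegral_mono fun ω => iSup_le fun m => ENNReal.le_tsum m
    _ = ∑' m : ℕ, ∫⁻ ω, ENNReal.ofReal (∑ k ∈ Finset.range (m + 1), ξ (k + 1) ω) ∂μ :=
        lintegral_tsum fun m => (ENNReal.measurable_ofReal.comp
          (Finset.measurable_sum _ fun k _ => hmeas (k+1))).aemeasurable
    _ ≤ ∑' m : ℕ, ENNReal.ofReal (C * ((m+1:ℕ):ℝ)^(q/2) * (((m+1:ℕ):ℝ)*c)^(1-q)) :=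
        ENNReal.tsum_le_tsum key
    _ = ENNReal.ofReal (∑' m : ℕ, C * ((m+1:ℕ):ℝ)^(q/2) * (((m+1:ℕ):ℝ)*c)^(1-q)) :=
        (ENNReal.ofReal_tsum_of_nonneg (fun m => by positivity) hsummable).symm
    _ < ⊤ := ENNReal.ofReal_lt_top
end

section
/- Let A be a strictly positive p×p matrix and x, y ∈ ℝ^p strictly positive. Then h(Ax, Ay) ≤ φ(A), where h is the Hilbert projective distance and φ(A) = log max_{i,j,k,l} (A_{ik}/A_{jk})·(A_{jl}/A_{il}) = max_{i,j} h(A^{i·}, A^{j·}) is the projective diameter parameter of A. -/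
/-- Hilbert projective distance of two strictly positive vectors. -/
noncomputable def hilbertDist {p : ℕ} (x y : Fin p → ℝ) : ℝ :=
  Real.log (⨆ k, ⨆ l, (x k / y k) * (y l / x l))

lemma ratio_sum_le_aux {p : ℕ} [NeZero p] (a b : Fin p → ℝ) (ha : ∀ i, 0 < a i)
    (hb : ∀ i, 0 < b i) : ∃ r, (∑ i, a i) / (∑ i, b i) ≤ a r / b r := by
  obtain ⟨r, hr⟩ := Finite.exists_max (fun i => a i / b i)
  refine ⟨r, ?_⟩
  have hbs : 0 < ∑ i, b i := Finset.sum_pos (fun i _ => hb i) Finset.univ_nonempty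
  rw [div_le_div_iff₀ hbs (hb r)]
  calc (∑ i, a i) * b r = ∑ i, a i * b r := by rw [Finset.sum_mul]
    _ ≤ ∑ i, a r * b i := by
        refine Finset.sum_le_sum fun i _ => ?_
        have h := hr i
        rw [div_le_div_iff₀ (hb i) (hb r)] at h
        linarith
    _ = a r * ∑ i, b i := by rw [Finset.mul_sum]

theorem stmt17 (p : ℕ) [NeZero p] (A : Matrix (Fin p) (Fin p) ℝ)
    (hA : ∀ i j, 0 < A i j)
    (x y : Fin p → ℝ) (hx : ∀ i, 0 < x i) (hy : ∀ i, 0 < y i) :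
    hilbertDist (A.mulVec x) (A.mulVec y) ≤
      ⨆ i, ⨆ j, hilbertDist (fun k => A i k) (fun k => A j k) := by
  have hne : Nonempty (Fin p) := Fin.pos_iff_nonempty.mp (Nat.pos_of_ne_zero (NeZero.ne p))
  obtain ⟨c⟩ := hne
  set S := ⨆ i, ⨆ j, hilbertDist (fun k => A i k) (fun k => A j k) with hS
  have hAx : ∀ k, 0 < A.mulVec x k := fun k => by
    simp only [Matrix.mulVec, dotProduct]
    exact Finset.sum_pos (fun r _ => mul_pos (hA k r) (hx r)) Finset.univ_nonempty
  have hAy : ∀ k, 0 < A.mulVec y k := fun k => by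
    simp only [Matrix.mulVec, dotProduct]
    exact Finset.sum_pos (fun r _ => mul_pos (hA k r) (hy r)) Finset.univ_nonempty
  rw [hilbertDist]
  have hpos : 0 < ⨆ k, ⨆ l,
      (A.mulVec x k / A.mulVec y k) * (A.mulVec y l / A.mulVec x l) := by
    refine lt_of_lt_of_le (b := (A.mulVec x c / A.mulVec y c) * (A.mulVec y c / A.mulVec x c)) ?_ ?_
    · exact mul_pos (div_pos (hAx c) (hAy c)) (div_pos (hAy c) (hAx c))
    · exact le_trans
        (le_ciSup (f := fun l => (A.mulVec x c / A.mulVec y c) * (A.mulVec y l / A.mulVec x l))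
          (Finite.bddAbove_range _) c)
        (le_ciSup (f := fun k => ⨆ l, (A.mulVec x k / A.mulVec y k) * (A.mulVec y l / A.mulVec x l))
          (Finite.bddAbove_range _) c)
  rw [Real.log_le_iff_le_exp hpos]
  refine ciSup_le fun k => ciSup_le fun l => ?_
  -- bound by the (k,l) row Hilbert distance
  have hgpos : 0 < ⨆ r, ⨆ s, (A k r / A l r) * (A l s / A k s) := by
    refine lt_of_lt_of_le (b := (A k c / A l c) * (A l c / A k c)) ?_ ?_
    · exact mul_pos (div_pos (hA k c) (hA l c)) (div_pos (hA l c) (hA k c))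
    · exact le_trans
        (le_ciSup (f := fun s => (A k c / A l c) * (A l s / A k s))
          (Finite.bddAbove_range _) c)
        (le_ciSup (f := fun r => ⨆ s, (A k r / A l r) * (A l s / A k s))
          (Finite.bddAbove_range _) c)
  have hDS : hilbertDist (fun r => A k r) (fun r => A l r) ≤ S := by
    exact le_trans
      (le_ciSup (f := fun j => hilbertDist (fun r => A k r) (fun r => A j r))
        (Finite.bddAbove_range _) l)
      (le_ciSup (f := fun i => ⨆ j, hilbertDist (fun r => A i r) (fun r => A j r))
        (Finite.bddAbove_range _) k)
  have hexp : Real.exp (hilbertDist (fun r => A k r) (fun r => A l r))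
      = ⨆ r, ⨆ s, (A k r / A l r) * (A l s / A k s) := by
    rw [hilbertDist, Real.exp_log hgpos]
  obtain ⟨r0, hr0⟩ := ratio_sum_le_aux (fun r => A k r * x r) (fun r => A l r * x r)
    (fun r => mul_pos (hA k r) (hx r)) (fun r => mul_pos (hA l r) (hx r))
  obtain ⟨s0, hs0⟩ := ratio_sum_le_aux (fun s => A l s * y s) (fun s => A k s * y s)
    (fun s => mul_pos (hA l s) (hy s)) (fun s => mul_pos (hA k s) (hy s))
  rw [mul_div_mul_right _ _ (ne_of_gt (hx r0))] at hr0
  rw [mul_div_mul_right _ _ (ne_of_gt (hy s0))] at hs0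
  have hxsum : A.mulVec x k / A.mulVec x l ≤ A k r0 / A l r0 := by
    simpa only [Matrix.mulVec, dotProduct] using hr0
  have hysum : A.mulVec y l / A.mulVec y k ≤ A l s0 / A k s0 := by
    simpa only [Matrix.mulVec, dotProduct] using hs0
  have hrearr : (A.mulVec x k / A.mulVec y k) * (A.mulVec y l / A.mulVec x l)
      = (A.mulVec x k / A.mulVec x l) * (A.mulVec y l / A.mulVec y k) := by
    field_simp
  calc (A.mulVec x k / A.mulVec y k) * (A.mulVec y l / A.mulVec x l)
      = (A.mulVec x k / A.mulVec x l) * (A.mulVec y l / A.mulVec y k) := hrearr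
    _ ≤ (A k r0 / A l r0) * (A l s0 / A k s0) := by
        refine mul_le_mul hxsum hysum (le_of_lt (div_pos (hAy l) (hAy k))) ?_
        exact le_of_lt (div_pos (hA k r0) (hA l r0))
    _ ≤ ⨆ r, ⨆ s, (A k r / A l r) * (A l s / A k s) := by
        exact le_trans
          (le_ciSup (f := fun s => (A k r0 / A l r0) * (A l s / A k s))
            (Finite.bddAbove_range _) s0)
          (le_ciSup (f := fun r => ⨆ s, (A k r / A l r) * (A l s / A k s))
            (Finite.bddAbove_range _) r0)
    _ = Real.exp (hilbertDist (fun r => A k r) (fun r => A l r)) := hexp.symm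
    _ ≤ Real.exp S := Real.exp_le_exp.mpr hDS
end
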